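/- Let C be an associative conformal algebra containing a conformal unit e₀, let I be a nilpotent ideal of C, and suppose ē₁, …, ē_N ∈ C/I satisfy ēᵢ∘₀ēᵢ = ēᵢ, {ēᵢ∘₀ē₀} = ēᵢ (where ē₀ = e₀ + I), and ēᵢ∘ₙēⱼ = 0 for all i ≠ j and all n ∈ ℕ. Then there exist e₁, …, e_N ∈ C such that eᵢ + I = ēᵢ, {eᵢ∘₀e₀} = eᵢ, eᵢ∘₀eᵢ = eᵢ, and eᵢ∘₀eⱼ = 0 for i ≠ j. -/

import Mathlib

section Abstract

/-- An (abstract) conformal algebra over `k`: a left `H = k[D]`-module with `k`-bilinear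
`n`-th products satisfying locality and sesquilinearity (the action of `D` is the action of
the polynomial variable `X`; terms with index `-1` read as `0`, which is achieved below by
the vanishing scalar `(0 : k)` at `n = 0`). -/
class ConformalAlgebra (k : Type) [Field k] (C : Type) [AddCommGroup C] [Module k C]
    [Module (Polynomial k) C] [IsScalarTower k (Polynomial k) C] where
  omul : ℕ → C → C → C
  omul_add_left : ∀ (n : ℕ) (a b c : C), omul n (a + b) c = omul n a c + omul n b c
  omul_add_right : ∀ (n : ℕ) (a b c : C), omul n a (b + c) = omul n a b + omul n a c
  omul_smul_left : ∀ (n : ℕ) (r : k) (a b : C), omul n (r • a) b = r • omul n a b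
  omul_smul_right : ∀ (n : ℕ) (r : k) (a b : C), omul n a (r • b) = r • omul n a b
  locality : ∀ a b : C, ∃ N : ℕ, ∀ n ≥ N, omul n a b = 0
  sesq_left : ∀ (n : ℕ) (a b : C),
    omul n ((Polynomial.X : Polynomial k) • a) b = -((n : k) • omul (n - 1) a b)
  sesq_right : ∀ (n : ℕ) (a b : C),
    omul n a ((Polynomial.X : Polynomial k) • b)
      = (Polynomial.X : Polynomial k) • omul n a b + (n : k) • omul (n - 1) a b

variable (k : Type) [Field k]
variable (C : Type) [AddCommGroup C] [Module k C] [Module (Polynomial k) C]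
  [IsScalarTower k (Polynomial k) C] [ConformalAlgebra k C]

/-- Abbreviation for the `n`-th product of a conformal algebra. -/
noncomputable abbrev om (n : ℕ) (a b : C) : C := ConformalAlgebra.omul (k := k) n a b

/-- The conformal algebra `C` is associative:
`(a ∘ₙ b) ∘ₘ c = ∑_{s=0}^{n} (-1)^s C(n,s) a ∘_{n-s} (b ∘_{m+s} c)`. -/
def ConformalAssoc : Prop :=
  ∀ (n m : ℕ) (a b c : C),
    om k C m (om k C n a b) c
      = ∑ s ∈ Finset.range (n + 1),
          (((-1 : k) ^ s) * (n.choose s : k)) • om k C (n - s) a (om k C (m + s) b c)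

/-- `{a ∘ₙ b} = ∑_{s ≥ 0} ((-1)^{n+s}/s!) Dˢ (a ∘_{n+s} b)` (a finite sum by locality;
`Dˢ x = Xˢ • x`). -/
noncomputable def obrace (n : ℕ) (a b : C) : C :=
  ∑ᶠ s : ℕ, (((-1 : k) ^ (n + s)) * ((s.factorial : k))⁻¹) •
    (((Polynomial.X : Polynomial k) ^ s) • om k C (n + s) a b)

/-- The `k`-span `A ∘_ω B` of all products `a ∘ₙ b`, `a ∈ A`, `b ∈ B`, `n ∈ ℕ`. -/
def omegaMulAbs (A B : Set C) : Set C :=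
  (Submodule.span k {y | ∃ a ∈ A, ∃ b ∈ B, ∃ n : ℕ, y = om k C n a b} : Submodule k C)

/-- Powers `I⁽¹⁾ = I`, `I⁽ᵐ⁺¹⁾ = I⁽ᵐ⁾ ∘_ω I`. -/
def idealPowAbs (I : Set C) : ℕ → Set C
  | 0 => I
  | m + 1 => omegaMulAbs k C (idealPowAbs I m) I

/-- The sequence of powers of `I` is eventually zero. -/
def IsNilpotentAbs (I : Set C) : Prop :=
  ∃ m : ℕ, ∀ m' ≥ m, idealPowAbs k C I m' ⊆ {0}

/-- `I` is an ideal of the conformal algebra `C`: an `H`-submodule with `a ∘ₙ b ∈ I` and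
`b ∘ₙ a ∈ I` for all `a ∈ C`, `b ∈ I`, `n ∈ ℕ`. -/
structure IsConfIdeal (I : Set C) : Prop where
  zero_mem : (0 : C) ∈ I
  add_mem : ∀ a ∈ I, ∀ b ∈ I, a + b ∈ I
  smul_mem : ∀ (p : Polynomial k), ∀ a ∈ I, p • a ∈ I
  omul_mem_left : ∀ (a : C), ∀ b ∈ I, ∀ n : ℕ, om k C n a b ∈ I
  omul_mem_right : ∀ (a : C), ∀ b ∈ I, ∀ n : ℕ, om k C n b a ∈ I

/-- `e` is an idempotent: `e ∘ₙ e = δ_{n,0} e`. -/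
def IsConfIdempotent (e : C) : Prop :=
  ∀ n : ℕ, om k C n e e = if n = 0 then e else 0

/-- `e` is a conformal unit: an idempotent with `e ∘₀ x = x` for all `x`. -/
def IsConfUnit (e : C) : Prop :=
  IsConfIdempotent k C e ∧ ∀ x : C, om k C 0 e x = x

/-- An ideal `P ≠ C` is prime if `A ∘_ω B ⊆ P` implies `A ⊆ P` or `B ⊆ P` for ideals `A, B`. -/
def IsPrimeConfIdeal (P : Set C) : Prop :=
  IsConfIdeal k C P ∧ P ≠ Set.univ ∧
    ∀ A B : Set C, IsConfIdeal k C A → IsConfIdeal k C B →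
      omegaMulAbs k C A B ⊆ P → A ⊆ P ∨ B ⊆ P

end Abstract



section PhiSec
variable {k : Type} [Field k] {R : Type} [AddCommGroup R] [Module k R]
variable (M : R →ₗ[k] R →ₗ[k] R)

noncomputable def phiM (a : R) : R := (3:k) • M a a - (2:k) • M a (M a a)

variable {M}

theorem phi_sq (hm : ∀ a b c : R, M (M a b) c = M a (M b c)) (a : R) :
    M (phiM M a) (phiM M a) - phiM M a
      = (4:k) • M (M a a - a) (M (M a a - a) (M a a - a))
        - (3:k) • M (M a a - a) (M a a - a) := by
  simp only [phiM, map_sub, map_smul, LinearMap.sub_apply, LinearMap.smul_apply, hm]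
  module

theorem phi_sub (hm : ∀ a b c : R, M (M a b) c = M a (M b c)) (a : R) :
    phiM M a - a = (M a a - a) - (2:k) • M (M a a - a) a := by
  simp only [phiM, map_sub, map_smul, LinearMap.sub_apply, LinearMap.smul_apply, hm]
  module

theorem phi_orth_left (hm : ∀ a b c : R, M (M a b) c = M a (M b c)) {f a : R}
    (h1 : M f a = 0) : M f (phiM M a) = 0 := by
  simp only [phiM, map_sub, map_smul, ← hm, h1, map_zero, LinearMap.zero_apply,
    smul_zero, sub_zero]


theorem phi_orth_right (hm : ∀ a b c : R, M (M a b) c = M a (M b c)) {f a : R}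
    (h2 : M a f = 0) : M (phiM M a) f = 0 := by
  simp only [phiM, map_sub, map_smul, LinearMap.sub_apply, LinearMap.smul_apply, hm, h2,
    map_zero, smul_zero, sub_zero]


section LiftSec
variable {k : Type} [Field k] {R : Type} [AddCommGroup R] [Module k R]
variable (M : R →ₗ[k] R →ₗ[k] R)

/-- powers chain of an ideal under a bilinear product -/
def Kch (J : Submodule k R) : ℕ → Submodule k R
  | 0 => J
  | t+1 => Submodule.span k {y | ∃ a ∈ Kch J t, ∃ b ∈ J, y = M a b}

theorem Kch_zero (J : Submodule k R) : Kch M J 0 = J := rfl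

theorem Kch_succ (J : Submodule k R) (t : ℕ) :
    Kch M J (t+1) = Submodule.span k {y | ∃ a ∈ Kch M J t, ∃ b ∈ J, y = M a b} := rfl

variable {M} {J : Submodule k R}

theorem Kch_succ_le (hJl : ∀ a b, b ∈ J → M a b ∈ J) (t : ℕ) :
    Kch M J (t+1) ≤ Kch M J t := by
  induction t with
  | zero =>
    rw [Kch_succ, Submodule.span_le]
    rintro _ ⟨a, _, b, hb, rfl⟩
    exact hJl a b hb
  | succ t iht =>
    rw [Kch_succ, Submodule.span_le]
    rintro _ ⟨a, ha, b, hb, rfl⟩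
    rw [Kch_succ]
    exact Submodule.subset_span ⟨a, iht ha, b, hb, rfl⟩

theorem Kch_le (hJl : ∀ a b, b ∈ J → M a b ∈ J) {s t : ℕ} (h : t ≤ s) :
    Kch M J s ≤ Kch M J t := by
  induction h with
  | refl => exact le_rfl
  | step _ ih => exact le_trans (Kch_succ_le hJl _) ih

theorem Kch_le_J (hJl : ∀ a b, b ∈ J → M a b ∈ J) (t : ℕ) : Kch M J t ≤ J :=
  Kch_le hJl (Nat.zero_le t)

theorem mul_mem_Kch (hm : ∀ a b c : R, M (M a b) c = M a (M b c))
    {s t : ℕ} {a b : R} (ha : a ∈ Kch M J s) (hb : b ∈ Kch M J t) :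
    M a b ∈ Kch M J (s + t + 1) := by
  induction t generalizing b with
  | zero =>
    rw [Kch_succ]
    exact Submodule.subset_span ⟨a, ha, b, hb, rfl⟩
  | succ t iht =>
    rw [Kch_succ] at hb
    induction hb using Submodule.span_induction with
    | mem y hy =>
      obtain ⟨c, hc, d, hd, rfl⟩ := hy
      rw [← hm]
      have : s + (t + 1) + 1 = (s + t + 1) + 1 := by omega
      rw [this, Kch_succ]
      exact Submodule.subset_span ⟨M a c, iht hc, d, hd, rfl⟩
    | zero => simp
    | add u v _ _ hu hv => rw [map_add]; exact add_mem hu hv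
    | smul r u _ hu => rw [map_smul]; exact Submodule.smul_mem _ r hu
section IterSec
variable {k : Type} [Field k] {R : Type} [AddCommGroup R] [Module k R]
variable {M : R →ₗ[k] R →ₗ[k] R} {J : Submodule k R}

theorem iter_defect (hm : ∀ a b c : R, M (M a b) c = M a (M b c))
    (hJl : ∀ a b, b ∈ J → M a b ∈ J) {a : R} (ha : M a a - a ∈ J) (r : ℕ) :
    M ((phiM M)^[r] a) ((phiM M)^[r] a) - (phiM M)^[r] a ∈ Kch M J r := by
  induction r with
  | zero => exact ha
  | succ r ih =>
    rw [Function.iterate_succ_apply']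
    set e := (phiM M)^[r] a with he
    rw [phi_sq hm]
    set u := M e e - e with hu
    have h2 : M u u ∈ Kch M J (r + 1) := by
      have := mul_mem_Kch hm ih ih
      exact Kch_le hJl (by omega) this
    have h3 : M u (M u u) ∈ Kch M J (r + 1) := by
      have := mul_mem_Kch hm ih (mul_mem_Kch hm ih ih)
      exact Kch_le hJl (by omega) this
    exact sub_mem (Submodule.smul_mem _ _ h3) (Submodule.smul_mem _ _ h2)

theorem iter_sub (hm : ∀ a b c : R, M (M a b) c = M a (M b c))
    (hJl : ∀ a b, b ∈ J → M a b ∈ J) (hJr : ∀ a b, b ∈ J → M b a ∈ J)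
    {a : R} (ha : M a a - a ∈ J) (r : ℕ) :
    (phiM M)^[r] a - a ∈ J := by
  induction r with
  | zero => simpa using J.zero_mem
  | succ r ih =>
    rw [Function.iterate_succ_apply']
    set e := (phiM M)^[r] a with he
    have hu : M e e - e ∈ J := Kch_le_J hJl r (iter_defect hm hJl ha r)
    have : phiM M e - e ∈ J := by
      rw [phi_sub hm]
      exact sub_mem hu (Submodule.smul_mem _ _ (hJr e _ hu))
    have := add_mem this ih
    simpa using this

theorem iter_mem_S (S : Submodule k R) (hS : ∀ a ∈ S, ∀ b ∈ S, M a b ∈ S)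
    {a : R} (ha : a ∈ S) (r : ℕ) : (phiM M)^[r] a ∈ S := by
  induction r with
  | zero => exact ha
  | succ r ih =>
    rw [Function.iterate_succ_apply']
    exact sub_mem (Submodule.smul_mem _ _ (hS _ ih _ ih))
      (Submodule.smul_mem _ _ (hS _ ih _ (hS _ ih _ ih)))

theorem iter_orth_left (hm : ∀ a b c : R, M (M a b) c = M a (M b c)) {f a : R}
    (h1 : M f a = 0) (r : ℕ) : M f ((phiM M)^[r] a) = 0 := by
  induction r with
  | zero => exact h1
  | succ r ih => rw [Function.iterate_succ_apply']; exact phi_orth_left hm ih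

theorem iter_orth_right (hm : ∀ a b c : R, M (M a b) c = M a (M b c)) {f a : R}
    (h2 : M a f = 0) (r : ℕ) : M ((phiM M)^[r] a) f = 0 := by
  induction r with
  | zero => exact h2
  | succ r ih => rw [Function.iterate_succ_apply']; exact phi_orth_right hm ih

theorem liftOrthFam (hm : ∀ a b c : R, M (M a b) c = M a (M b c))
    (hJl : ∀ a b, b ∈ J → M a b ∈ J) (hJr : ∀ a b, b ∈ J → M b a ∈ J)
    (m : ℕ) (hKm : Kch M J m = ⊥)
    (S : Submodule k R) (hS : ∀ a ∈ S, ∀ b ∈ S, M a b ∈ S) :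
    ∀ (N : ℕ) (y : Fin N → R), (∀ i, y i ∈ S) → (∀ i, M (y i) (y i) - y i ∈ J) →
      (∀ i j, i ≠ j → M (y i) (y j) ∈ J) →
      ∃ e : Fin N → R, (∀ i, e i ∈ S) ∧ (∀ i, e i - y i ∈ J) ∧
        (∀ i, M (e i) (e i) = e i) ∧ (∀ i j, i ≠ j → M (e i) (e j) = 0) := by
  intro N
  induction N with
  | zero => intro y _ _ _; exact ⟨y, fun i => i.elim0, fun i => i.elim0, fun i => i.elim0,
      fun i => i.elim0⟩
  | succ N ih =>
    intro y hyS hyi hyo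
    obtain ⟨e', he'S, he'J, he'i, he'o⟩ := ih (fun i => y i.castSucc)
      (fun i => hyS _) (fun i => hyi _)
      (fun i j hij => hyo _ _ (fun h => hij (Fin.castSucc_injective _ h)))
    set f : R := ∑ i, e' i with hf
    have hfS : f ∈ S := Submodule.sum_mem _ (fun i _ => he'S i)
    -- f is idempotent and M (e' i) f = e' i = M f (e' i)
    have hef : ∀ i, M (e' i) f = e' i := by
      intro i
      rw [hf, map_sum]
      rw [Finset.sum_eq_single i (fun j _ hj => he'o i j (Ne.symm hj)) (by simp)]
      exact he'i i
    have hfe : ∀ i, M f (e' i) = e' i := by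
      intro i
      rw [hf, map_sum, LinearMap.sum_apply]
      rw [Finset.sum_eq_single i (fun j _ hj => he'o j i hj) (by simp)]
      exact he'i i
    have hff : M f f = f := by
      conv_lhs => rw [hf]
      rw [map_sum, ← hf]
      simp only [hfe]
      exact hf.symm
    set yl : R := y (Fin.last N) with hyl
    set b : R := yl - M f yl - M yl f + M f (M yl f) with hb
    have hfb : M f b = 0 := by
      simp only [hb, map_sub, map_add, ← hm, hff]
      abel
    have hbf : M b f = 0 := by
      simp only [hb, map_sub, map_add, LinearMap.sub_apply, LinearMap.add_apply, hm, hff]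
      abel
    have hbS : b ∈ S := by
      refine add_mem (sub_mem (sub_mem (hyS _) (hS _ hfS _ (hyS _)))
        (hS _ (hyS _) _ hfS)) (hS _ hfS _ (hS _ (hyS _) _ hfS))
    have hMfy : M f yl ∈ J := by
      rw [hf, map_sum, LinearMap.sum_apply]
      refine Submodule.sum_mem _ (fun i _ => ?_)
      have h1 : M (e' i - y i.castSucc) yl ∈ J := hJr _ _ (he'J i)
      have h2 : M (y i.castSucc) yl ∈ J :=
        hyo _ _ (Fin.ne_of_lt (Fin.castSucc_lt_last i))
      have := add_mem h1 h2
      simpa [map_sub, LinearMap.sub_apply] using this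
    have hMyf : M yl f ∈ J := by
      rw [hf, map_sum]
      refine Submodule.sum_mem _ (fun i _ => ?_)
      have h1 : M yl (e' i - y i.castSucc) ∈ J := hJl _ _ (he'J i)
      have h2 : M yl (y i.castSucc) ∈ J :=
        hyo _ _ (Ne.symm (Fin.ne_of_lt (Fin.castSucc_lt_last i)))
      have := add_mem h1 h2
      simpa [map_sub] using this
    have hd : b - yl ∈ J := by
      have key : b - yl = (M f (M yl f) - M f yl) - M yl f := by rw [hb]; abel
      rw [key]
      exact sub_mem (sub_mem (hJl _ _ hMyf) hMfy) hMyf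
    have hbi : M b b - b ∈ J := by
      have key : M b b - b = (M yl yl - yl) + (M yl (b - yl) + (M (b - yl) yl
          + (M (b - yl) (b - yl) - (b - yl)))) := by
        simp only [map_sub, map_add, LinearMap.sub_apply, LinearMap.add_apply]
        abel
      rw [key]
      exact add_mem (hyi _) (add_mem (hJl _ _ hd) (add_mem (hJr _ _ hd)
        (sub_mem (hJl _ _ hd) hd)))
    set el : R := (phiM M)^[m] b with hel
    have hel_idem : M el el = el := by
      have := iter_defect hm hJl hbi m
      rw [hKm, Submodule.mem_bot, sub_eq_zero] at this
      exact this
    have hel_sub : el - b ∈ J := iter_sub hm hJl hJr hbi m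
    have hel_S : el ∈ S := iter_mem_S S hS hbS m
    have hfel : M f el = 0 := iter_orth_left hm hfb m
    have helf : M el f = 0 := iter_orth_right hm hbf m
    have horth1 : ∀ i, M (e' i) el = 0 := by
      intro i
      rw [← hef i, hm, hfel, map_zero]
    have horth2 : ∀ i, M el (e' i) = 0 := by
      intro i
      rw [← hfe i, ← hm, helf]
      simp
    refine ⟨Fin.snoc e' el, ?_, ?_, ?_, ?_⟩
    · intro i
      refine Fin.lastCases ?_ ?_ i
      · simpa using hel_S
      · intro j; simpa using he'S j
    · intro i
      refine Fin.lastCases ?_ ?_ i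
      · have := add_mem hel_sub hd
        simpa using this
      · intro j; simpa using he'J j
    · intro i
      refine Fin.lastCases ?_ ?_ i
      · simpa using hel_idem
      · intro j; simpa using he'i j
    · intro i j
      refine Fin.lastCases ?_ ?_ i
      · refine Fin.lastCases ?_ ?_ j
        · intro h; exact absurd rfl h
        · intro l _; simpa using horth2 l
      · intro l
        refine Fin.lastCases ?_ ?_ j
        · intro _; simpa using horth1 l
        · intro l2 hne
          have hne' : l ≠ l2 := fun h => hne (by rw [h])
          simpa using he'o l l2 hne'

section ConfSec
variable {k : Type} [Field k] [CharZero k]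
variable {C : Type} [AddCommGroup C] [Module k C] [Module (Polynomial k) C]
  [IsScalarTower k (Polynomial k) C] [ConformalAlgebra k C]

/-- The `n`-th product as a bilinear map. -/
noncomputable def omLin (k : Type) [Field k] (C : Type) [AddCommGroup C] [Module k C]
    [Module (Polynomial k) C] [IsScalarTower k (Polynomial k) C] [ConformalAlgebra k C]
    (n : ℕ) : C →ₗ[k] C →ₗ[k] C :=
  LinearMap.mk₂ k (om k C n) (ConformalAlgebra.omul_add_left n)
    (ConformalAlgebra.omul_smul_left n) (ConformalAlgebra.omul_add_right n)
    (ConformalAlgebra.omul_smul_right n)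

@[simp] theorem omLin_apply (n : ℕ) (a b : C) : omLin k C n a b = om k C n a b := rfl

theorem om_zero_left (n : ℕ) (b : C) : om k C n 0 b = 0 := by
  rw [← omLin_apply, map_zero, LinearMap.zero_apply]

theorem om_zero_right (n : ℕ) (a : C) : om k C n a 0 = 0 := by
  rw [← omLin_apply, map_zero]

theorem sc (r : k) (p : Polynomial k) (v : C) : p • (r • v) = r • (p • v) := by
  rw [← algebraMap_smul (Polynomial k) r v, ← mul_smul, mul_comm, mul_smul,
    algebraMap_smul]

theorem a00 (hassoc : ConformalAssoc k C) (a b c : C) :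
    om k C 0 (om k C 0 a b) c = om k C 0 a (om k C 0 b c) := by
  have := hassoc 0 0 a b c
  simpa using this

theorem a0s (hassoc : ConformalAssoc k C) (s : ℕ) (a b c : C) :
    om k C s (om k C 0 a b) c = om k C 0 a (om k C s b c) := by
  have := hassoc 0 s a b c
  simpa using this

theorem unit_prod (hassoc : ConformalAssoc k C) {e₀ : C} (he₀ : IsConfUnit k C e₀)
    (s t : ℕ) (a : C) :
    om k C t (om k C s a e₀) e₀ = if t = 0 then om k C s a e₀ else 0 := by
  rw [hassoc s t a e₀ e₀]
  rcases Nat.eq_zero_or_pos t with rfl | ht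
  · rw [if_pos rfl]
    rw [Finset.sum_eq_single 0]
    · simp [he₀.1 0]
    · intro r _ hr0
      rw [he₀.1 (0 + r), if_neg (by omega), om_zero_right, smul_zero]
    · intro h; exact absurd (Finset.mem_range.mpr (Nat.succ_pos s)) h
  · rw [if_neg (by omega)]
    refine Finset.sum_eq_zero fun r _ => ?_
    rw [he₀.1 (t + r), if_neg (by omega), om_zero_right, smul_zero]

theorem oX_left0 (a b : C) : om k C 0 ((Polynomial.X : Polynomial k) • a) b = 0 := by
  have := ConformalAlgebra.sesq_left (k := k) 0 a b
  simpa using this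

theorem oXpow_left0 {s : ℕ} (hs : 1 ≤ s) (a b : C) :
    om k C 0 (((Polynomial.X : Polynomial k) ^ s) • a) b = 0 := by
  obtain ⟨t, rfl⟩ := Nat.exists_eq_add_of_le' hs
  rw [pow_succ', mul_smul]
  exact oX_left0 _ _

theorem oX_right0 (a b : C) :
    om k C 0 a ((Polynomial.X : Polynomial k) • b)
      = (Polynomial.X : Polynomial k) • om k C 0 a b := by
  have := ConformalAlgebra.sesq_right (k := k) 0 a b
  simpa using this

theorem oXpow_right0 (s : ℕ) (a b : C) :
    om k C 0 a (((Polynomial.X : Polynomial k) ^ s) • b)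
      = ((Polynomial.X : Polynomial k) ^ s) • om k C 0 a b := by
  induction s with
  | zero => simp
  | succ s ih =>
    rw [pow_succ', mul_smul, oX_right0, ih, ← mul_smul, ← pow_succ']

theorem obrace0_eq (a b : C) (Nb : ℕ) (h : ∀ s, Nb ≤ s → om k C s a b = 0) :
    obrace k C 0 a b = ∑ s ∈ Finset.range Nb,
      (((-1 : k) ^ s) * ((s.factorial : k))⁻¹) •
        (((Polynomial.X : Polynomial k) ^ s) • om k C s a b) := by
  rw [obrace]
  simp only [zero_add]
  apply finsum_eq_sum_of_support_subset
  intro s hs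
  simp only [Function.mem_support] at hs
  by_contra hns
  apply hs
  rw [h s (by simpa [Finset.mem_range] using fun hh => hns hh), smul_zero, smul_zero]

theorem om_add_left (n : ℕ) (a b c : C) :
    om k C n (a + b) c = om k C n a c + om k C n b c :=
  ConformalAlgebra.omul_add_left n a b c

theorem om_smul_left (n : ℕ) (r : k) (a b : C) :
    om k C n (r • a) b = r • om k C n a b :=
  ConformalAlgebra.omul_smul_left n r a b

theorem om_sesq_left (n : ℕ) (a b : C) :
    om k C n ((Polynomial.X : Polynomial k) • a) b = -((n : k) • om k C (n - 1) a b) :=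
  ConformalAlgebra.sesq_left n a b

theorem om_smul_right (n : ℕ) (r : k) (a b : C) :
    om k C n a (r • b) = r • om k C n a b :=
  ConformalAlgebra.omul_smul_right n r a b

theorem scalar_shuffle (c r : k) (p : Polynomial k) (w : C) :
    c • (p • -(r • w)) = (-(c * r)) • (p • w) := by
  rw [smul_neg, smul_neg, sc, smul_smul, ← neg_smul]

theorem scalar_shuffle2 (c : k) (p q : Polynomial k) (w : C) :
    q • (c • (p • w)) = c • ((q * p) • w) := by
  rw [sc, mul_smul]

theorem Tadd (a a' b : C) :
    obrace k C 0 (a + a') b = obrace k C 0 a b + obrace k C 0 a' b := by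
  obtain ⟨N1, h1⟩ := ConformalAlgebra.locality (k := k) a b
  obtain ⟨N2, h2⟩ := ConformalAlgebra.locality (k := k) a' b
  set N := max N1 N2 with hN
  have ha : ∀ s, N ≤ s → om k C s a b = 0 := fun s hs => h1 s (le_trans (le_max_left _ _) hs)
  have ha' : ∀ s, N ≤ s → om k C s a' b = 0 := fun s hs => h2 s (le_trans (le_max_right _ _) hs)
  have haa : ∀ s, N ≤ s → om k C s (a + a') b = 0 := fun s hs => by
    rw [om_add_left, ha s hs, ha' s hs, add_zero]
  rw [obrace0_eq _ _ N haa, obrace0_eq _ _ N ha, obrace0_eq _ _ N ha',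
    ← Finset.sum_add_distrib]
  refine Finset.sum_congr rfl fun s _ => ?_
  rw [om_add_left, smul_add, smul_add]

theorem Tsmul (r : k) (a b : C) :
    obrace k C 0 (r • a) b = r • obrace k C 0 a b := by
  obtain ⟨N, h⟩ := ConformalAlgebra.locality (k := k) a b
  have ha : ∀ s, N ≤ s → om k C s a b = 0 := fun s hs => h s hs
  have hra : ∀ s, N ≤ s → om k C s (r • a) b = 0 := fun s hs => by
    rw [om_smul_left, ha s hs, smul_zero]
  rw [obrace0_eq _ _ N hra, obrace0_eq _ _ N ha, Finset.smul_sum]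
  refine Finset.sum_congr rfl fun s _ => ?_
  rw [om_smul_left, sc, smul_comm]

theorem T0 (b : C) : obrace k C 0 0 b = 0 := by
  rw [obrace0_eq 0 b 0 (fun s _ => om_zero_left s b), Finset.range_zero, Finset.sum_empty]

theorem Tsum {ι : Type*} (t : Finset ι) (g : ι → C) (b : C) :
    obrace k C 0 (∑ i ∈ t, g i) b = ∑ i ∈ t, obrace k C 0 (g i) b := by
  classical
  induction t using Finset.induction_on with
  | empty => simpa using T0 b
  | insert _ _ hx ih =>
    rw [Finset.sum_insert hx, Finset.sum_insert hx, Tadd, ih]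

theorem T_fixed_unit (hassoc : ConformalAssoc k C) {e₀ : C} (he₀ : IsConfUnit k C e₀)
    (s : ℕ) (a : C) : obrace k C 0 (om k C s a e₀) e₀ = om k C s a e₀ := by
  have h : ∀ t, 1 ≤ t → om k C t (om k C s a e₀) e₀ = 0 := fun t ht => by
    rw [unit_prod hassoc he₀, if_neg (by omega)]
  rw [obrace0_eq _ _ 1 h, Finset.sum_range_one, unit_prod hassoc he₀, if_pos rfl]
  simp

theorem T_D (u b : C) :
    obrace k C 0 ((Polynomial.X : Polynomial k) • u) b
      = (Polynomial.X : Polynomial k) • obrace k C 0 u b := by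
  obtain ⟨N, h⟩ := ConformalAlgebra.locality (k := k) u b
  have hu : ∀ s, N ≤ s → om k C s u b = 0 := h
  have hXu : ∀ s, N + 1 ≤ s → om k C s ((Polynomial.X : Polynomial k) • u) b = 0 := by
    intro s hs
    rw [om_sesq_left, hu (s-1) (by omega), smul_zero, neg_zero]
  rw [obrace0_eq _ _ (N+1) hXu, obrace0_eq _ _ N hu, Finset.sum_range_succ',
    Finset.smul_sum]
  have h0 : ((-1 : k) ^ 0 * ((Nat.factorial 0 : k))⁻¹) •
      (((Polynomial.X : Polynomial k) ^ 0) •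
        om k C 0 ((Polynomial.X : Polynomial k) • u) b) = 0 := by
    rw [om_sesq_left]
    simp
  rw [h0, add_zero]
  refine Finset.sum_congr rfl fun s _ => ?_
  rw [om_sesq_left]
  have hfac : ((s + 1).factorial : k) = ((s : k) + 1) * (s.factorial : k) := by
    rw [Nat.factorial_succ]
    push_cast
    ring
  have hne1 : ((s : k) + 1) ≠ 0 := by
    have : ((s : k) + 1) = ((s + 1 : ℕ) : k) := by push_cast; ring
    rw [this]
    exact Nat.cast_ne_zero.mpr (by omega)
  have hne2 : (s.factorial : k) ≠ 0 := Nat.cast_ne_zero.mpr (Nat.factorial_ne_zero s)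
  have hidx : s + 1 - 1 = s := by omega
  rw [hidx, scalar_shuffle, scalar_shuffle2, ← pow_succ']
  congr 1
  rw [hfac, pow_succ]
  push_cast
  field_simp

theorem T_pow (s : ℕ) (u b : C) :
    obrace k C 0 (((Polynomial.X : Polynomial k) ^ s) • u) b
      = ((Polynomial.X : Polynomial k) ^ s) • obrace k C 0 u b := by
  induction s with
  | zero => simp
  | succ s ih =>
    rw [pow_succ', mul_smul, T_D, ih, ← mul_smul, ← pow_succ']

theorem T_idem (hassoc : ConformalAssoc k C) {e₀ : C} (he₀ : IsConfUnit k C e₀) (a : C) :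
    obrace k C 0 (obrace k C 0 a e₀) e₀ = obrace k C 0 a e₀ := by
  obtain ⟨N, h⟩ := ConformalAlgebra.locality (k := k) a e₀
  rw [obrace0_eq a e₀ N h, Tsum]
  refine Finset.sum_congr rfl fun s _ => ?_
  rw [Tsmul, T_pow, T_fixed_unit hassoc he₀]

theorem T_mul (hassoc : ConformalAssoc k C) (a b e₀ : C) :
    obrace k C 0 (om k C 0 a b) e₀ = om k C 0 a (obrace k C 0 b e₀) := by
  obtain ⟨NB, hB⟩ := ConformalAlgebra.locality (k := k) b e₀
  have hb : ∀ s, NB ≤ s → om k C s b e₀ = 0 := hB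
  have hab : ∀ s, NB ≤ s → om k C s (om k C 0 a b) e₀ = 0 := fun s hs => by
    rw [a0s hassoc, hb s hs, om_zero_right]
  rw [obrace0_eq _ _ NB hab, obrace0_eq _ _ NB hb]
  have key : om k C 0 a (∑ s ∈ Finset.range NB, (((-1:k)^s) * ((s.factorial : k))⁻¹) •
      (((Polynomial.X : Polynomial k) ^ s) • om k C s b e₀))
      = ∑ s ∈ Finset.range NB, om k C 0 a ((((-1:k)^s) * ((s.factorial : k))⁻¹) •
      (((Polynomial.X : Polynomial k) ^ s) • om k C s b e₀)) := by
    rw [← omLin_apply, map_sum]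
    rfl
  rw [key]
  refine Finset.sum_congr rfl fun s _ => ?_
  rw [a0s hassoc, om_smul_right, oXpow_right0]

theorem T_left (hassoc : ConformalAssoc k C) {e₀ : C} (he₀ : IsConfUnit k C e₀)
    (a z : C) : om k C 0 (obrace k C 0 a e₀) z = om k C 0 a z := by
  obtain ⟨N, h⟩ := ConformalAlgebra.locality (k := k) a e₀
  have ha : ∀ s, N + 1 ≤ s → om k C s a e₀ = 0 := fun s hs => h s (by omega)
  rw [obrace0_eq a e₀ (N+1) ha]
  rw [show om k C 0 (∑ s ∈ Finset.range (N+1), ((-1:k)^s * ((s.factorial : k))⁻¹) •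
      (((Polynomial.X : Polynomial k) ^ s) • om k C s a e₀)) z
    = ∑ s ∈ Finset.range (N+1), om k C 0 (((-1:k)^s * ((s.factorial : k))⁻¹) •
      (((Polynomial.X : Polynomial k) ^ s) • om k C s a e₀)) z from by
    rw [← omLin_apply, map_sum, LinearMap.sum_apply]; rfl]
  rw [Finset.sum_range_succ']
  have hz : ∀ s ∈ Finset.range N, om k C 0
      (((-1:k)^(s+1) * (((s+1).factorial : k))⁻¹) •
        (((Polynomial.X : Polynomial k) ^ (s+1)) • om k C (s+1) a e₀)) z = 0 := by
    intro s _
    rw [om_smul_left, oXpow_left0 (by omega), smul_zero]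
  rw [Finset.sum_congr rfl hz, Finset.sum_const, smul_zero, zero_add]
  simp only [pow_zero, Nat.factorial_zero, Nat.cast_one, inv_one, one_mul, one_smul]
  rw [a00 hassoc, he₀.2 z]


end ConfSec



/-- Let `C` be an associative conformal algebra with a conformal unit `e₀`
and `I` a nilpotent ideal. If `ē₁, …, ē_N ∈ C/I` (given by representatives `x i ∈ C`) satisfy
`ēᵢ ∘₀ ēᵢ = ēᵢ`, `{ēᵢ ∘₀ ē₀} = ēᵢ` and `ēᵢ ∘ₙ ēⱼ = 0` for `i ≠ j`, then there are
`e₁, …, e_N ∈ C` with `eᵢ + I = ēᵢ`, `{eᵢ ∘₀ e₀} = eᵢ`, `eᵢ ∘₀ eᵢ = eᵢ` and `eᵢ ∘₀ eⱼ = 0`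
for `i ≠ j`. -/
theorem stmt5 (k : Type) [Field k] [IsAlgClosed k] [CharZero k]
    (C : Type) [AddCommGroup C] [Module k C] [Module (Polynomial k) C]
    [IsScalarTower k (Polynomial k) C] [ConformalAlgebra k C]
    (hassoc : ConformalAssoc k C)
    (e₀ : C) (he₀ : IsConfUnit k C e₀)
    (I : Set C) (hI : IsConfIdeal k C I) (hInil : IsNilpotentAbs k C I)
    (N : ℕ) (x : Fin N → C)
    (hidem : ∀ i, om k C 0 (x i) (x i) - x i ∈ I)
    (hbrace : ∀ i, obrace k C 0 (x i) e₀ - x i ∈ I)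
    (horth : ∀ i j, i ≠ j → ∀ n : ℕ, om k C n (x i) (x j) ∈ I) :
    ∃ e : Fin N → C,
      (∀ i, e i - x i ∈ I) ∧
      (∀ i, obrace k C 0 (e i) e₀ = e i) ∧
      (∀ i, om k C 0 (e i) (e i) = e i) ∧
      (∀ i j, i ≠ j → om k C 0 (e i) (e j) = 0) := by
  classical
  let J : Submodule k C :=
    { carrier := I
      add_mem' := fun ha hb => hI.add_mem _ ha _ hb
      zero_mem' := hI.zero_mem
      smul_mem' := fun r a ha => by
        have h2 := hI.smul_mem (Polynomial.C r) a ha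
        have h3 : (Polynomial.C r) • a = r • a := by
          rw [← Polynomial.algebraMap_eq, algebraMap_smul]
        rwa [h3] at h2 }
  have hmemJ : ∀ z : C, z ∈ J ↔ z ∈ I := fun z => Iff.rfl
  set M : C →ₗ[k] C →ₗ[k] C := omLin k C 0 with hM
  have hm : ∀ a b c : C, M (M a b) c = M a (M b c) := fun a b c => a00 hassoc a b c
  have hJl : ∀ a b : C, b ∈ J → M a b ∈ J := fun a b hb => hI.omul_mem_left a b hb 0
  have hJr : ∀ a b : C, b ∈ J → M b a ∈ J := fun a b hb => hI.omul_mem_right a b hb 0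
  have hKsub : ∀ t, (Kch M J t : Set C) ⊆ idealPowAbs k C I t := by
    intro t
    induction t with
    | zero => exact fun z hz => hz
    | succ t ih =>
      have hle : Kch M J (t+1) ≤ Submodule.span k
          {y | ∃ a ∈ idealPowAbs k C I t, ∃ b ∈ I, ∃ n : ℕ, y = om k C n a b} := by
        rw [Kch_succ]
        refine Submodule.span_le.mpr ?_
        rintro _ ⟨a, ha, b, hb, rfl⟩
        exact Submodule.subset_span ⟨a, ih ha, b, hb, 0, rfl⟩
      intro z hz
      exact hle hz
  obtain ⟨m, hmnil⟩ := hInil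
  have hbot : Kch M J m = ⊥ := by
    rw [Submodule.eq_bot_iff]
    intro z hz
    have := hmnil m le_rfl (hKsub m hz)
    simpa using this
  let S : Submodule k C :=
    { carrier := {z | obrace k C 0 z e₀ = z}
      add_mem' := fun {a b} ha hb => by
        have : obrace k C 0 (a + b) e₀ = a + b := by
          rw [Tadd, ha, hb]
        exact this
      zero_mem' := T0 e₀
      smul_mem' := fun r a ha => by
        have : obrace k C 0 (r • a) e₀ = r • a := by
          rw [Tsmul, ha]
        exact this }
  have hmemS : ∀ z : C, z ∈ S ↔ obrace k C 0 z e₀ = z := fun z => Iff.rfl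
  have hS : ∀ a ∈ S, ∀ b ∈ S, M a b ∈ S := by
    intro a _ b hb
    have : obrace k C 0 (om k C 0 a b) e₀ = om k C 0 a b := by
      rw [T_mul hassoc, (hmemS b).mp hb]
    exact this
  set y : Fin N → C := fun i => obrace k C 0 (x i) e₀ with hy
  have hyS : ∀ i, y i ∈ S := fun i => T_idem hassoc he₀ (x i)
  have hyx : ∀ i, y i - x i ∈ J := fun i => hbrace i
  have hyi : ∀ i, M (y i) (y i) - y i ∈ J := by
    intro i
    have h1 : M (y i) (y i) = om k C 0 (x i) (y i) := T_left hassoc he₀ (x i) (y i)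
    have e1 : om k C 0 (x i) (y i) - y i
        = (om k C 0 (x i) (x i) - x i) + (om k C 0 (x i) (y i - x i) + (x i - y i)) := by
      simp only [← omLin_apply, map_sub]
      abel
    rw [h1, e1]
    refine add_mem (hidem i) (add_mem (hJl _ _ (hyx i)) ?_)
    rw [← neg_sub]
    exact neg_mem (hyx i)
  have hyo : ∀ i j, i ≠ j → M (y i) (y j) ∈ J := by
    intro i j hij
    have h1 : M (y i) (y j) = om k C 0 (x i) (y j) := T_left hassoc he₀ (x i) (y j)
    have e1 : om k C 0 (x i) (y j)
        = om k C 0 (x i) (x j) + om k C 0 (x i) (y j - x j) := by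
      simp only [← omLin_apply, map_sub]
      abel
    rw [h1, e1]
    exact add_mem (horth i j hij 0) (hJl _ _ (hyx j))
  obtain ⟨e, heS, heJ, hei, heo⟩ := liftOrthFam hm hJl hJr m hbot S hS N y hyS hyi hyo
  refine ⟨e, ?_, ?_, ?_, ?_⟩
  · intro i
    have := add_mem (heJ i) (hyx i)
    rwa [sub_add_sub_cancel] at this
  · intro i
    exact (hmemS (e i)).mp (heS i)
  · intro i
    exact hei i
  · intro i j hij
    exact heo i j hij
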